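/- Forward controlled invariance of the lane-keeping safe set for the discrete double integrator: Let a_max > 0, t_s > 0, and y_max ≥ 0, and define h(y, v) = √(2·a_max·(y_max − sgn(v)·y) + (1/4)·a_max²·t_s²) − |v| − (1/2)·a_max·t_s, where sgn is the sign function and √ is the real square root (0 on negative arguments). Then the set S = {(y, v) ∈ ℝ² : h(y, v) ≥ 0} is forward controlled invariant for the discrete double integrator dynamics y_{k+1} = y_k + t_s·v_k, v_{k+1} = v_k + t_s·acc_k with input constraint |acc_k| ≤ a_max: for every (y₀, v₀) with h(y₀, v₀) ≥ 0 there exist sequences acc : ℕ → ℝ with |acc_k| ≤ a_max for all k, and (y_k, v_k) defined by the recursion from (y₀, v₀), such that h(y_k, v_k) ≥ 0 for all k ∈ ℕ. -/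
import Mathlib

/-- The lane-keeping discrete-time control barrier function. -/
noncomputable def hLK (amax ts ymax y v : ℝ) : ℝ :=
  Real.sqrt (2 * amax * (ymax - Real.sign v * y) + (1 / 4) * amax ^ 2 * ts ^ 2)
    - |v| - (1 / 2) * amax * ts

/-- Braking control law. -/
noncomputable def uLK (amax ts v : ℝ) : ℝ :=
  if amax * ts ≤ |v| then -(Real.sign v * amax) else -(v / ts)

lemma hLK_neg (amax ts ymax y v : ℝ) :
    hLK amax ts ymax (-y) (-v) = hLK amax ts ymax y v := by
  simp [hLK, Real.sign_neg, abs_neg]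

lemma uLK_neg (amax ts v : ℝ) : uLK amax ts (-v) = -uLK amax ts v := by
  simp only [uLK, abs_neg, Real.sign_neg]
  split <;> ring

lemma uLK_abs_le (amax ts v : ℝ) (ha : 0 < amax) (hts : 0 < ts) :
    |uLK amax ts v| ≤ amax := by
  unfold uLK
  split
  next h =>
    rw [abs_neg, abs_mul, abs_of_pos ha]
    calc |Real.sign v| * amax ≤ 1 * amax := by
          have := Real.sign_apply_eq v
          rcases this with h | h | h <;> simp [h, ha.le]
        _ = amax := one_mul _
  next h =>
    push_neg at h
    rw [abs_neg, abs_div, abs_of_pos hts, div_le_iff₀ hts]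
    exact le_of_lt h

/-- hLK is nonnegative at zero velocity. -/
lemma hLK_zero_vel (amax ts ymax y : ℝ) (ha : 0 < amax) (hts : 0 < ts)
    (hy : 0 ≤ ymax) : 0 ≤ hLK amax ts ymax y 0 := by
  unfold hLK
  rw [Real.sign_zero]
  have h1 : (1 / 2 * amax * ts) ^ 2 = (1 / 4) * amax ^ 2 * ts ^ 2 := by ring
  have h2 : Real.sqrt ((1 / 4) * amax ^ 2 * ts ^ 2) = 1 / 2 * amax * ts := by
    rw [← h1, Real.sqrt_sq (by positivity)]
  have h3 : Real.sqrt ((1 / 4) * amax ^ 2 * ts ^ 2)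
      ≤ Real.sqrt (2 * amax * (ymax - 0 * y) + (1 / 4) * amax ^ 2 * ts ^ 2) := by
    apply Real.sqrt_le_sqrt; nlinarith
  simp only [abs_zero]
  linarith [h2 ▸ h3]

/-- Sufficient condition for hLK ≥ 0 with nonnegative velocity. -/
lemma hLK_suff (amax ts ymax y v : ℝ) (ha : 0 < amax) (hts : 0 < ts)
    (hy : 0 ≤ ymax) (hv : 0 ≤ v)
    (h : v ^ 2 + amax * ts * v ≤ 2 * amax * (ymax - y)) :
    0 ≤ hLK amax ts ymax y v := by
  rcases hv.eq_or_lt with rfl | hv'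
  · exact hLK_zero_vel amax ts ymax y ha hts hy
  · unfold hLK
    rw [Real.sign_of_pos hv', abs_of_pos hv']
    have hpos : 0 < v + 1 / 2 * amax * ts := by positivity
    have := (Real.le_sqrt' hpos (y := 2 * amax * (ymax - 1 * y) + (1 / 4) * amax ^ 2 * ts ^ 2)).2
      (by nlinarith)
    linarith

/-- Necessary condition for hLK ≥ 0 with positive velocity. -/
lemma hLK_nec (amax ts ymax y v : ℝ) (ha : 0 < amax) (hts : 0 < ts)
    (hv : 0 < v) (h : 0 ≤ hLK amax ts ymax y v) :
    v ^ 2 + amax * ts * v ≤ 2 * amax * (ymax - y) := by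
  unfold hLK at h
  rw [Real.sign_of_pos hv, abs_of_pos hv] at h
  have hpos : 0 < v + 1 / 2 * amax * ts := by positivity
  have := (Real.le_sqrt' hpos (y := 2 * amax * (ymax - 1 * y) + (1 / 4) * amax ^ 2 * ts ^ 2)).1
    (by linarith)
  nlinarith

/-- Main one-step invariance under the braking control. -/
lemma hLK_step (amax ts ymax : ℝ) (ha : 0 < amax) (hts : 0 < ts) (hy : 0 ≤ ymax)
    (y v : ℝ) (h : 0 ≤ hLK amax ts ymax y v) :
    0 ≤ hLK amax ts ymax (y + ts * v) (v + ts * uLK amax ts v) := by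
  -- reduce to the case 0 ≤ v by symmetry
  have key : ∀ y v : ℝ, 0 ≤ v → 0 ≤ hLK amax ts ymax y v →
      0 ≤ hLK amax ts ymax (y + ts * v) (v + ts * uLK amax ts v) := by
    intro y v hv h
    rcases hv.eq_or_lt with rfl | hv'
    · have hu : uLK amax ts 0 = 0 := by
        simp [uLK, not_le.2 (by positivity : (0:ℝ) < amax * ts)]
      rw [hu]
      simpa using hLK_zero_vel amax ts ymax y ha hts hy
    · have hP := hLK_nec amax ts ymax y v ha hts hv' h
      by_cases hc : amax * ts ≤ |v|
      · -- full braking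
        have hu : uLK amax ts v = -amax := by
          rw [uLK, if_pos hc, Real.sign_of_pos hv']; ring
        rw [hu]
        have hv2 : 0 ≤ v + ts * -amax := by
          rw [abs_of_pos hv'] at hc; nlinarith
        apply hLK_suff amax ts ymax _ _ ha hts hy hv2
        nlinarith
      · -- partial braking to zero velocity
        have hu : uLK amax ts v = -(v / ts) := by rw [uLK, if_neg hc]
        rw [hu]
        have : v + ts * -(v / ts) = 0 := by field_simp; ring
        rw [this]
        exact hLK_zero_vel amax ts ymax _ ha hts hy
  rcases le_or_gt 0 v with hv | hv
  · exact key y v hv h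
  · have h' : 0 ≤ hLK amax ts ymax (-y) (-v) := by rw [hLK_neg]; exact h
    have := key (-y) (-v) (by linarith) h'
    rw [uLK_neg] at this
    have heq : (-y + ts * -v) = -(y + ts * v) := by ring
    have heq2 : (-v + ts * -uLK amax ts v) = -(v + ts * uLK amax ts v) := by ring
    rw [heq, heq2, hLK_neg] at this
    exact this

/-- Forward controlled invariance of the lane-keeping safe set
`S = {(y, v) : hLK amax ts ymax y v ≥ 0}` for the discrete double integrator
`y_{k+1} = y_k + ts v_k`, `v_{k+1} = v_k + ts acc_k` with `|acc_k| ≤ amax`. -/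
theorem hLK_forward_controlled_invariance
    (amax ts ymax : ℝ) (hamax : 0 < amax) (hts : 0 < ts) (hymax : 0 ≤ ymax)
    (y₀ v₀ : ℝ) (h0 : hLK amax ts ymax y₀ v₀ ≥ 0) :
    ∃ (acc : ℕ → ℝ) (y v : ℕ → ℝ),
      (∀ k, |acc k| ≤ amax) ∧ y 0 = y₀ ∧ v 0 = v₀ ∧
      (∀ k, y (k + 1) = y k + ts * v k) ∧
      (∀ k, v (k + 1) = v k + ts * acc k) ∧
      (∀ k, hLK amax ts ymax (y k) (v k) ≥ 0) := by
  let st : ℕ → ℝ × ℝ := fun k => Nat.rec (y₀, v₀)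
    (fun _ s => (s.1 + ts * s.2, s.2 + ts * uLK amax ts s.2)) k
  refine ⟨fun k => uLK amax ts (st k).2, fun k => (st k).1, fun k => (st k).2,
    fun k => uLK_abs_le amax ts _ hamax hts, rfl, rfl, fun k => rfl, fun k => rfl, ?_⟩
  intro k
  induction k with
  | zero => exact h0
  | succ n ih => exact hLK_step amax ts ymax hamax hts hymax _ _ ih
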